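/- Let S be a dense subsemigroup of (T,+), e ∈ E(T), (X,⟨T_s⟩_{s∈S}) a dynamical system, L a minimal left ideal of e*_S, and x ∈ X. If x is a uniformly recurrent point near e, then there exists u ∈ L with T_u(x) = x. -/
import Mathlib


open Filter Topology Set

attribute [local instance] Ultrafilter.add Ultrafilter.addSemigroup

universe u

section NearIdem

variable {T : Type u} [AddSemigroup T] [TopologicalSpace T]

/-- The set of ultrafilters on `S` converging to `e` (denoted `e*_S`). -/
def EStar (S : AddSubsemigroup T) (e : T) : Set (Ultrafilter S) :=
  {p | ∀ U ∈ nhds e, {s : S | (s : T) ∈ U} ∈ p}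

/-- `B ⊆ S` is syndetic near `e`. -/
def SyndeticNear (S : AddSubsemigroup T) (e : T) (B : Set S) : Prop :=
  ∀ U ∈ nhds e, ∃ F : Finset S, (∀ t ∈ F, (t : T) ∈ U) ∧
    ∃ V ∈ nhds e, ∀ s : S, (s : T) ∈ V → ∃ t ∈ F, t + s ∈ B

/-- `A ⊆ S` is topologically piecewise syndetic near `e`. -/
def TopPWSNear (S : AddSubsemigroup T) (e : T) (A : Set S) : Prop :=
  ∀ U ∈ nhds e, ∃ F : Finset S, (∀ t ∈ F, (t : T) ∈ U) ∧
    ∃ V ∈ nhds e, ∀ G : Finset S, ∀ O ∈ nhds e, ∃ x : S, (x : T) ∈ O ∧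
      ∀ g ∈ G, (g : T) ∈ V → ∃ t ∈ F, t + (g + x) ∈ A

/-- Left ideal of a subsemigroup `E` of `βM`. -/
def IsLeftIdealIn {M : Type*} [AddSemigroup M] (E L : Set (Ultrafilter M)) : Prop :=
  L.Nonempty ∧ L ⊆ E ∧ ∀ p ∈ E, ∀ q ∈ L, p + q ∈ L

/-- Minimal left ideal of `E`. -/
def IsMinimalLeftIdealIn {M : Type*} [AddSemigroup M] (E L : Set (Ultrafilter M)) : Prop :=
  IsLeftIdealIn E L ∧ ∀ L', IsLeftIdealIn E L' → L' ⊆ L → L' = L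

/-- The smallest ideal `K(E)`, the union of all minimal left ideals of `E`. -/
def SmallestIdeal {M : Type*} [AddSemigroup M] (E : Set (Ultrafilter M)) : Set (Ultrafilter M) :=
  {p | ∃ L, IsMinimalLeftIdealIn E L ∧ p ∈ L}

/-- `T_p(x) = p`-`lim_(s ∈ S) T_s(x)`. -/
noncomputable def TP {M : Type*} {X : Type*} [TopologicalSpace X]
    (Ts : M → X → X) (p : Ultrafilter M) (x : X) : X :=
  (p.map fun s => Ts s x).lim

/-- `x` is a uniformly recurrent point near `e`. -/
def UnifRecNear (S : AddSubsemigroup T) (e : T) {X : Type*} [TopologicalSpace X]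
    (Ts : S → X → X) (x : X) : Prop :=
  ∀ W ∈ nhds x, SyndeticNear S e {s : S | Ts s x ∈ W}

/-- `x` and `y` are proximal near `e` (characterized via `e*_S`). -/
noncomputable def ProximalNear (S : AddSubsemigroup T) (e : T) {X : Type*} [TopologicalSpace X]
    (Ts : S → X → X) (x y : X) : Prop :=
  ∃ p ∈ EStar S e, TP Ts p x = TP Ts p y

variable [T2Space T]

/-- If `x` is uniformly recurrent near `e`, then some `u ∈ L` fixes `x`. -/
theorem unifRecNear_exists_fix (S : AddSubsemigroup T) (hdense : Dense (S : Set T))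
    (hl : ∀ t : T, Continuous fun x : T => t + x)
    (hr : ∀ t : T, Continuous fun x : T => x + t)
    (e : T) (he : e + e = e)
    {X : Type u} [TopologicalSpace X] [CompactSpace X] [T2Space X]
    (Ts : S → X → X) (hTcont : ∀ s, Continuous (Ts s))
    (hTact : ∀ s t z, Ts s (Ts t z) = Ts (s + t) z) (L : Set (Ultrafilter S))
    (hL : IsMinimalLeftIdealIn (EStar S e) L) (x : X)
    (hur : UnifRecNear S e Ts x) :
    ∃ u ∈ L, TP Ts u x = x := by
  obtain ⟨⟨⟨q, hq⟩, hLE, hLideal⟩, hLmin⟩ := hL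
  -- `EStar S e` is closed under addition
  have hEadd : ∀ p ∈ EStar S e, ∀ r ∈ EStar S e, p + r ∈ EStar S e := by
    intro p hp r hrE' U hU
    obtain ⟨U', hU'U, hU'open, heU'⟩ := mem_nhds_iff.mp hU
    have h1 : {t : S | (t : T) ∈ (fun y : T => y + e) ⁻¹' U'} ∈ p := by
      apply hp
      exact ((hr e).isOpen_preimage _ hU'open).mem_nhds (by simpa [he] using heU')
    have : ∀ᶠ t in (p : Filter S), ∀ᶠ s in (r : Filter S), ((t + s : S) : T) ∈ U := by
      filter_upwards [h1] with t ht
      have h2 : {s : S | (s : T) ∈ (fun y : T => (t : T) + y) ⁻¹' U'} ∈ r := by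
        apply hrE'
        exact ((hl (t : T)).isOpen_preimage _ hU'open).mem_nhds ht
      filter_upwards [h2] with s hs
      exact hU'U (by push_cast; exact hs)
    exact (Ultrafilter.eventually_add p r _).mpr this
  -- `EStar S e` is closed
  have hEclosed : IsClosed (EStar S e) := by
    have : EStar S e =
        ⋂ U ∈ 𝓝 e, {p : Ultrafilter S | {s : S | (s : T) ∈ U} ∈ p} := by
      ext p; simp [EStar]
    rw [this]
    exact isClosed_biInter fun U _ => ultrafilter_isClosed_basic _
  -- `L` is compact (it equals `EStar S e + q`, a continuous image of a compact set)
  have hqE : q ∈ EStar S e := hLE hq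
  have himg : (fun p => p + q) '' (EStar S e) = L := by
    apply hLmin
    · refine ⟨⟨q + q, ⟨q, hqE, rfl⟩⟩, ?_, ?_⟩
      · rintro _ ⟨p, hp, rfl⟩
        exact hLE (hLideal p hp q hq)
      · rintro p hp _ ⟨p', hp', rfl⟩
        exact ⟨p + p', hEadd p hp p' hp', show p + p' + q = p + (p' + q) from add_assoc p p' q⟩
    · rintro _ ⟨p, hp, rfl⟩
      exact hLideal p hp q hq
  have hLcomp : IsCompact L := by
    rw [← himg]
    exact (hEclosed.isCompact).image (Ultrafilter.continuous_add_left q)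
  -- key step: for every neighbourhood `W` of `x` there is `u ∈ L` with `{s | Ts s x ∈ W} ∈ u`
  have key : ∀ W ∈ 𝓝 x, ∃ u ∈ L, {s : S | Ts s x ∈ W} ∈ u := by
    intro W hW
    have hsyn := hur W hW
    set B : Set S := {s : S | Ts s x ∈ W} with hB
    set D : Set S := {t : S | {s : S | t + s ∈ B} ∈ q} with hD
    have hmeet : ∀ U ∈ 𝓝 e, ({t : S | (t : T) ∈ U} ∩ D).Nonempty := by
      intro U hU
      obtain ⟨F, hF, V, hV, hFV⟩ := hsyn U hU
      have hq' : {s : S | (s : T) ∈ V} ∈ q := hqE V hV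
      have hcov : {s : S | ∃ t ∈ F, t + s ∈ B} ∈ q :=
        mem_of_superset hq' fun s hs => hFV s hs
      have : ∃ t ∈ F, {s : S | t + s ∈ B} ∈ q := by
        by_contra hcon
        push_neg at hcon
        have hcompl : ∀ t ∈ F, {s : S | t + s ∈ B}ᶜ ∈ q := fun t ht =>
          Ultrafilter.compl_mem_iff_notMem.mpr (hcon t ht)
        have h2 : (⋂ t ∈ F, {s : S | t + s ∈ B}ᶜ) ∈ q :=
          (Filter.biInter_finset_mem F).mpr hcompl
        have h3 : {s : S | ∃ t ∈ F, t + s ∈ B}ᶜ ∈ q := by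
          apply mem_of_superset h2
          intro s hs hmem
          obtain ⟨t, htF, hts⟩ := hmem
          exact (mem_iInter₂.mp hs t htF) hts
        exact (Ultrafilter.compl_mem_iff_notMem.mp h3) hcov
      obtain ⟨t, htF, ht⟩ := this
      exact ⟨t, hF t htF, ht⟩
    have hne : (Filter.comap ((↑) : S → T) (𝓝 e) ⊓ 𝓟 D).NeBot := by
      rw [Filter.inf_principal_neBot_iff]
      intro U hU
      obtain ⟨U', hU', hsub⟩ := Filter.mem_comap.mp hU
      obtain ⟨t, ht, htD⟩ := hmeet U' hU'
      exact ⟨t, hsub ht, htD⟩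
    let r : Ultrafilter S := Ultrafilter.of (Filter.comap ((↑) : S → T) (𝓝 e) ⊓ 𝓟 D)
    have hrle : (r : Filter S) ≤ Filter.comap ((↑) : S → T) (𝓝 e) ⊓ 𝓟 D :=
      Ultrafilter.of_le _
    have hrE : r ∈ EStar S e := by
      intro U hU
      exact hrle (Filter.mem_inf_of_left (Filter.preimage_mem_comap hU))
    have hrD : D ∈ r := hrle (Filter.mem_inf_of_right (Filter.mem_principal_self D))
    refine ⟨r + q, hLideal r hrE q hq, ?_⟩
    have : ∀ᶠ t in (r : Filter S), ∀ᶠ s in (q : Filter S), t + s ∈ B := by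
      filter_upwards [hrD] with t ht
      exact ht
    exact (Ultrafilter.eventually_add r q _).mpr this
  -- compactness argument: find `u ∈ L` with `{s | Ts s x ∈ closure W} ∈ u` for all `W ∈ 𝓝 x`
  let ι := {W : Set X // W ∈ 𝓝 x}
  let Z : ι → Set (Ultrafilter S) := fun i => {u | {s : S | Ts s x ∈ closure i.1} ∈ u}
  have hZc : ∀ i, IsClosed (Z i) := fun i => ultrafilter_isClosed_basic _
  have hfin : ∀ t : Finset ι, (L ∩ ⋂ i ∈ t, Z i).Nonempty := by
    intro t
    have hWmem : (⋂ i ∈ t, i.1) ∈ 𝓝 x := (Filter.biInter_finset_mem t).mpr fun i _ => i.2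
    obtain ⟨u, huL, hu⟩ := key _ hWmem
    refine ⟨u, huL, ?_⟩
    simp only [mem_iInter]
    intro i hi
    exact mem_of_superset hu fun s hs =>
      subset_closure (mem_iInter₂.mp hs i hi)
  obtain ⟨u, huL, hu⟩ := hLcomp.inter_iInter_nonempty Z hZc hfin
  refine ⟨u, huL, ?_⟩
  -- `TP Ts u x` lies in `closure W` for every `W ∈ 𝓝 x`
  have hlim : (u.map fun s => Ts s x : Filter X) ≤ 𝓝 (TP Ts u x) :=
    Ultrafilter.le_nhds_lim _
  have hmemcl : ∀ W ∈ 𝓝 x, TP Ts u x ∈ closure W := by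
    intro W hW
    have hWu : {s : S | Ts s x ∈ closure W} ∈ u := mem_iInter.mp hu ⟨W, hW⟩
    have : TP Ts u x ∈ closure (closure W) :=
      mem_closure_iff_ultrafilter.mpr ⟨u.map fun s => Ts s x, hWu, hlim⟩
    rwa [closure_closure] at this
  -- conclude by regularity (compact Hausdorff) of `X`
  by_contra hne
  obtain ⟨A, B', hA, hB', hyA, hxB', hAB⟩ := t2_separation hne
  obtain ⟨C, hC, hCclosed, hCB⟩ := exists_mem_nhds_isClosed_subset (hB'.mem_nhds hxB')
  have hy : TP Ts u x ∈ closure C := hmemcl C hC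
  rw [hCclosed.closure_eq] at hy
  exact hAB.ne_of_mem hyA (hCB hy) rfl

end NearIdem
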